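/- (Closed-form throughput, high-λ regime, single power level.) Assume λ ≥ exp(−θ/ξ). Then [∫₀^∞ ∫_{g₀(x)}^∞ p₁(x)·e^{−(x+y)} dy dx] / (1 + W·∫₀^∞ ∫_{g₀(x)}^∞ q₁(y)·e^{−(x+y)} dy dx) = λ / ((1+z₂+z₁·z₂)·exp(θ/ρ)·exp((θ/ξ)·(z₁+1))·λ^{z₁+1} + z₁·W/(1+z₁)). (Note that g₀(x) ≥ θ/ρ for all x ≥ 0 in this regime, so q₁(y) = exp(−(ρ·y − θ)/(θ·γ_SB)) on the integration region.) -/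

import Mathlib

open Real MeasureTheory

lemma exp_int_aux (c d a : ℝ) (hc : 0 < c) :
    ∫ y in Set.Ioi a, Real.exp (-(c * y + d)) = Real.exp (-(c * a + d)) / c := by
  have h : ∀ y : ℝ, Real.exp (-(c * y + d)) = Real.exp (-d) * Real.exp (-c * y) := by
    intro y; rw [← Real.exp_add]; ring_nf
  simp_rw [h, MeasureTheory.integral_const_mul]
  have key : (∫ y in Set.Ioi a, Real.exp (-c * y)) = Real.exp (-c * a) / c := by
    have hderiv : ∀ x ∈ Set.Ici a,
        HasDerivAt (fun y : ℝ => -Real.exp (-c * y) / c) (Real.exp (-c * x)) x := by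
      intro x _
      have h1 : HasDerivAt (fun y : ℝ => -c * y) (-c) x := by
        simpa using (hasDerivAt_id x).const_mul (-c)
      have h2 := (h1.exp.neg).div_const c
      refine h2.congr_deriv ?_
      rw [div_eq_iff hc.ne']; ring
    have htend : Filter.Tendsto (fun y : ℝ => -Real.exp (-c * y) / c)
        Filter.atTop (nhds 0) := by
      have h1 : Filter.Tendsto (fun y : ℝ => -c * y) Filter.atTop Filter.atBot := by
        simpa using Filter.Tendsto.const_mul_atTop_of_neg (neg_neg_iff_pos.mpr hc) Filter.tendsto_id
      have h2 := (Real.tendsto_exp_atBot.comp h1).neg.div_const c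
      simpa using h2
    have := integral_Ioi_of_hasDerivAt_of_tendsto' hderiv
      (exp_neg_integrableOn_Ioi a hc) htend
    rw [this]; ring
  rw [key, ← mul_div_assoc, ← Real.exp_add]

/-- closed-form throughput, high-λ regime, single power level: for
`λ ≥ e^{−θ/ξ}`, with `p₁(x) = exp(−θ(γ_UD x + 1)/ξ)`,
`q₁(y) = min(exp(−(ρy−θ)/(θγ_SB)), 1)` and `g₀(x) = z₁z₂x + θ/ρ + z₁(θ/ξ + ln λ)`,
the throughput ratio of double integrals equals the closed form `τ_h(λ)`. -/
theorem stmt18 (θ ρ ξ γSB γUD W lam : ℝ)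
    (hθ : 0 < θ) (hρ : 0 < ρ) (hξ : 0 < ξ) (hγSB : 0 < γSB) (hγUD : 0 < γUD) (hW : 0 < W)
    (hlam0 : 0 < lam)
    (z₁ z₂ : ℝ) (hz₁ : z₁ = θ * γSB / ρ) (hz₂ : z₂ = θ * γUD / ξ)
    (p₁ q₁ g₀ : ℝ → ℝ)
    (hp₁ : ∀ x : ℝ, p₁ x = Real.exp (-(θ * (γUD * x + 1)) / ξ))
    (hq₁ : ∀ y : ℝ, q₁ y = min (Real.exp (-(ρ * y - θ) / (θ * γSB))) 1)
    (hg₀ : ∀ x : ℝ, g₀ x = z₁ * z₂ * x + θ / ρ + z₁ * (θ / ξ + Real.log lam))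
    (hlam : Real.exp (-θ / ξ) ≤ lam) :
    (∫ x in Set.Ioi (0 : ℝ), ∫ y in Set.Ioi (g₀ x), p₁ x * Real.exp (-(x + y))) /
        (1 + W * ∫ x in Set.Ioi (0 : ℝ), ∫ y in Set.Ioi (g₀ x),
          q₁ y * Real.exp (-(x + y))) =
      lam / ((1 + z₂ + z₁ * z₂) * Real.exp (θ / ρ) * Real.exp ((θ / ξ) * (z₁ + 1)) *
          lam ^ (z₁ + 1) + z₁ * W / (1 + z₁)) := by
  have hz₁pos : 0 < z₁ := by rw [hz₁]; positivity
  have hz₂pos : 0 < z₂ := by rw [hz₂]; positivity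
  obtain ⟨L, hL⟩ : ∃ L : ℝ, L = θ / ξ + Real.log lam := ⟨_, rfl⟩
  have hL0 : 0 ≤ L := by
    have h1 : Real.log (Real.exp (-θ / ξ)) ≤ Real.log lam :=
      Real.log_le_log (Real.exp_pos _) hlam
    rw [Real.log_exp, neg_div] at h1
    rw [hL]; linarith
  have hg₀' : ∀ x : ℝ, g₀ x = z₁ * z₂ * x + θ / ρ + z₁ * L := fun x => by rw [hg₀ x, hL]
  obtain ⟨A, hA⟩ : ∃ A : ℝ, A = 1 + z₂ + z₁ * z₂ := ⟨_, rfl⟩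
  have hApos : 0 < A := by rw [hA]; positivity
  -- numerator
  have hnum : (∫ x in Set.Ioi (0 : ℝ), ∫ y in Set.Ioi (g₀ x), p₁ x * Real.exp (-(x + y)))
      = Real.exp (-(θ / ρ + θ / ξ + z₁ * L)) / A := by
    have step1 : ∀ x : ℝ, (∫ y in Set.Ioi (g₀ x), p₁ x * Real.exp (-(x + y)))
        = Real.exp (-(A * x + (θ / ρ + θ / ξ + z₁ * L))) := by
      intro x
      rw [MeasureTheory.integral_const_mul]
      have hin : (∫ y in Set.Ioi (g₀ x), Real.exp (-(x + y)))
          = Real.exp (-x) * Real.exp (-(g₀ x)) := by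
        simp_rw [neg_add, Real.exp_add, MeasureTheory.integral_const_mul,
          integral_exp_neg_Ioi]
      rw [hin, hp₁ x, hg₀' x, ← Real.exp_add, ← Real.exp_add]
      congr 1
      rw [hA, hL, hz₂]
      field_simp
      ring
    simp_rw [step1]
    rw [exp_int_aux A _ 0 hApos, mul_zero, zero_add]
  -- denominator
  have hden : (∫ x in Set.Ioi (0 : ℝ), ∫ y in Set.Ioi (g₀ x), q₁ y * Real.exp (-(x + y)))
      = z₁ / (z₁ + 1) * (Real.exp (-(θ / ρ + (z₁ + 1) * L)) / A) := by
    have step1 : Set.EqOn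
        (fun x => ∫ y in Set.Ioi (g₀ x), q₁ y * Real.exp (-(x + y)))
        (fun x => z₁ / (z₁ + 1) * Real.exp (-(A * x + (θ / ρ + (z₁ + 1) * L))))
        (Set.Ioi (0 : ℝ)) := by
      intro x hx
      dsimp only
      have hx0 : (0 : ℝ) < x := hx
      have hgx : θ / ρ ≤ g₀ x := by
        rw [hg₀' x]
        nlinarith [mul_pos (mul_pos hz₁pos hz₂pos) hx0, mul_nonneg hz₁pos.le hL0,
          mul_pos hz₁pos hz₂pos]
      have hq : Set.EqOn (fun y => q₁ y * Real.exp (-(x + y)))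
          (fun y => Real.exp (-((z₁ + 1) / z₁ * y + (x - 1 / γSB))))
          (Set.Ioi (g₀ x)) := by
        intro y hy
        have hy' : θ / ρ < y := lt_of_le_of_lt hgx hy
        have hry : θ ≤ ρ * y := by
          rw [div_lt_iff₀ hρ] at hy'
          nlinarith
        have hexp1 : (-(ρ * y - θ) / (θ * γSB)) ≤ 0 := by
          apply div_nonpos_of_nonpos_of_nonneg
          · linarith
          · positivity
        simp only [hq₁ y]
        rw [min_eq_left (Real.exp_le_one_iff.mpr hexp1), ← Real.exp_add]
        congr 1
        rw [hz₁]
        field_simp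
        ring
      rw [MeasureTheory.setIntegral_congr_fun measurableSet_Ioi hq]
      have hcpos : (0 : ℝ) < (z₁ + 1) / z₁ := by positivity
      rw [exp_int_aux _ _ _ hcpos, hg₀' x]
      have key : -((z₁ + 1) / z₁ * (z₁ * z₂ * x + θ / ρ + z₁ * L) + (x - 1 / γSB))
          = -(A * x + (θ / ρ + (z₁ + 1) * L)) := by
        rw [hA, hz₁]
        field_simp
        ring
      rw [key]
      field_simp
    rw [MeasureTheory.setIntegral_congr_fun measurableSet_Ioi step1,
      MeasureTheory.integral_const_mul, exp_int_aux A _ 0 hApos, mul_zero, zero_add]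
  rw [hnum, hden]
  have e1 : Real.exp (-(θ / ρ + θ / ξ + z₁ * L))
      = lam * Real.exp (-(θ / ρ + (z₁ + 1) * L)) := by
    nth_rewrite 1 [← Real.exp_log hlam0]
    rw [← Real.exp_add]
    congr 1
    rw [hL]; ring
  obtain ⟨E, hE⟩ : ∃ E : ℝ, E = Real.exp (-(θ / ρ + (z₁ + 1) * L)) := ⟨_, rfl⟩
  have hEpos : 0 < E := hE ▸ Real.exp_pos _
  rw [← hE] at e1 ⊢
  have hEx : Real.exp (θ / ρ + (z₁ + 1) * L)
      = Real.exp (θ / ρ) * Real.exp (θ / ξ * (z₁ + 1)) * Real.exp (Real.log lam * (z₁ + 1)) := by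
    rw [← Real.exp_add, ← Real.exp_add]
    congr 1
    rw [hL]; ring
  have e2 : (1 + z₂ + z₁ * z₂) * Real.exp (θ / ρ) * Real.exp ((θ / ξ) * (z₁ + 1)) *
      lam ^ (z₁ + 1) = A / E := by
    rw [Real.rpow_def_of_pos hlam0, hE, hA, eq_div_iff (Real.exp_ne_zero _)]
    have h0 : Real.exp (θ / ρ) * Real.exp (θ / ξ * (z₁ + 1)) * Real.exp (Real.log lam * (z₁ + 1))
        * Real.exp (-(θ / ρ + (z₁ + 1) * L)) = 1 := by
      rw [← Real.exp_add, ← Real.exp_add, ← Real.exp_add, Real.exp_eq_one_iff, hL]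
      ring
    linear_combination (1 + z₂ + z₁ * z₂) * h0
  rw [e1, e2]
  have hz₁1 : (0 : ℝ) < z₁ + 1 := by linarith
  have h1 : (0 : ℝ) < 1 + W * (z₁ / (z₁ + 1) * (E / A)) := by
    have := mul_pos hW (mul_pos (div_pos hz₁pos hz₁1) (div_pos hEpos hApos))
    linarith
  have h2 : (0 : ℝ) < A / E + z₁ * W / (1 + z₁) := by
    have h3 := div_pos hApos hEpos
    have h4 := div_pos (mul_pos hz₁pos hW) (by linarith : (0:ℝ) < 1 + z₁)
    linarith
  rw [div_eq_div_iff h1.ne' h2.ne']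
  field_simp
  ring
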